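/- arXiv:1508.03546 — 2 statements merged into one kernel-verified Lean document; each statement's English description precedes it below -/
import Mathlib

section
/- Let t = g(w) = (a, b) be a node of the Stern–Brocot tree with a ≥ 2 and b ≥ 2 (equivalently, t does not lie on either branch emanating from the root, so that its parents t⁺ = g⁺(w) and t⁻ = g⁻(w) are themselves pairs of coprime positive integers). Then τ(t) = τ(t⁺) · r · u · τ(t⁻) = τ(t⁻) · u · r · τ(t⁺), where · denotes concatenation of words. -/
/-- The alphabet `{r, u}` of cube rolls: `r` = right roll, `u` = up roll. -/
inductive Letter
  | r : Letter
  | u : Letter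
  deriving DecidableEq

/-- The times `t ∈ (0,1)` at which the segment `t ↦ (t·a, t·b)` crosses a grid line:
`t = k/a` (crossing the vertical line `x = k`) for `1 ≤ k ≤ a−1`, and `t = i/b`
(crossing the horizontal line `y = i`) for `1 ≤ i ≤ b−1`. -/
def crossingTimes (a b : ℕ) : Finset ℚ :=
  ((Finset.Icc 1 (a - 1)).image fun k : ℕ => (k : ℚ) / (a : ℚ)) ∪
    ((Finset.Icc 1 (b - 1)).image fun i : ℕ => (i : ℚ) / (b : ℚ))

/-- The tumble sequence `τ(a,b)`: the word over `{r, u}` obtained by recording, in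
increasing order of the crossing times `t` of the segment `t ↦ (t·a, t·b)`, a letter
`r` at each crossing `t = k/a` of a vertical line and a letter `u` at each crossing
`t = i/b` of a horizontal line.  (For `gcd(a,b) = 1`, a crossing time `t` is of the
form `k/a` with `1 ≤ k ≤ a−1` exactly when `t·a` is an integer.) -/
def tumbleWord (a b : ℕ) : List Letter :=
  ((crossingTimes a b).sort (· ≤ ·)).map fun t =>
    if (t * (a : ℚ)).den = 1 then Letter.r else Letter.u

/-- One step of the Stern–Brocot recursion on triples `(g, g⁺, g⁻)`:
`true` (the letter `+`) sends `(g, g⁺, g⁻)` to `(g + g⁺, g⁺, g)`, and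
`false` (the letter `−`) sends `(g, g⁺, g⁻)` to `(g + g⁻, g, g⁻)`. -/
def sbStep : (ℕ × ℕ) × (ℕ × ℕ) × (ℕ × ℕ) → Bool → (ℕ × ℕ) × (ℕ × ℕ) × (ℕ × ℕ)
  | (g, gp, _gm), true => (g + gp, gp, g)
  | (g, _gp, gm), false => (g + gm, g, gm)

/-- The Stern–Brocot triple `(g(w), g⁺(w), g⁻(w))` of the node indexed by the word `w`
over `{+, −}` (`true` = `+`, `false` = `−`), starting from
`(g(ε), g⁺(ε), g⁻(ε)) = ((1,1), (0,1), (1,0))`. -/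
def sb (w : List Bool) : (ℕ × ℕ) × (ℕ × ℕ) × (ℕ × ℕ) :=
  w.foldl sbStep ((1, 1), (0, 1), (1, 0))

lemma den_one_iff' (x : ℚ) : x.den = 1 ↔ ∃ z : ℤ, x = (z : ℚ) := by
  constructor
  · intro h
    exact ⟨x.num, ((Rat.den_eq_one_iff x).1 h).symm⟩
  · rintro ⟨z, rfl⟩
    exact Rat.den_intCast z

lemma nat_div_den_one_iff {m n : ℕ} (hn : 0 < n) : (((m : ℚ)) / (n : ℚ)).den = 1 ↔ n ∣ m := by
  rw [den_one_iff']
  constructor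
  · rintro ⟨z, hz⟩
    have hn' : (n : ℚ) ≠ 0 := by positivity
    have hm : (m : ℚ) = z * n := by field_simp at hz; linarith [hz]
    have hz0 : 0 ≤ z := by
      by_contra h
      push_neg at h
      have h2 : (z : ℚ) * n < 0 := by
        apply mul_neg_of_neg_of_pos
        · exact_mod_cast h
        · exact_mod_cast hn
      rw [← hm] at h2
      have h5 : (0:ℚ) ≤ (m:ℚ) := by positivity
      linarith
    refine ⟨z.toNat, ?_⟩
    have h3 : (m : ℤ) = n * z := by
      have : ((m : ℤ) : ℚ) = ((n * z : ℤ) : ℚ) := by push_cast; linarith [hm]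
      exact_mod_cast this
    have h4 : (m : ℤ) = (n : ℤ) * z.toNat := by rw [Int.toNat_of_nonneg hz0]; exact h3
    exact_mod_cast h4
  · rintro ⟨c, rfl⟩
    refine ⟨c, ?_⟩
    have hn' : (n : ℚ) ≠ 0 := by positivity
    push_cast
    field_simp

lemma mem_crossingTimes {u v : ℕ} {x : ℚ} :
    x ∈ crossingTimes u v ↔
      (∃ k, (1 ≤ k ∧ k ≤ u - 1) ∧ (k : ℚ) / (u : ℚ) = x) ∨
        ∃ i, (1 ≤ i ∧ i ≤ v - 1) ∧ (i : ℚ) / (v : ℚ) = x := by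
  simp [crossingTimes, Finset.mem_Icc]

lemma cmp_div {k u i v : ℕ} (hu : 0 < u) (hv : 0 < v) :
    ((k : ℚ) / u < (i : ℚ) / v ↔ k * v < i * u) := by
  rw [div_lt_div_iff₀ (by exact_mod_cast hu) (by exact_mod_cast hv)]
  exact_mod_cast Iff.rfl

def psi (p q a b : ℕ) (t : ℚ) : ℚ :=
  if (t * (p : ℚ)).den = 1 then t * p / a else t * q / b

def psi2 (p q p' q' a b : ℕ) (t : ℚ) : ℚ :=
  if (t * (p' : ℚ)).den = 1 then (t * p' + p) / a else (t * q' + q) / b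

lemma psi_eval_r {p : ℕ} (hp : 0 < p) (q a b k : ℕ) :
    psi p q a b ((k : ℚ) / p) = (k : ℚ) / a := by
  have hp0 : (p : ℚ) ≠ 0 := by positivity
  unfold psi
  rw [div_mul_cancel₀ _ hp0]
  simp

lemma psi_eval_u {p q : ℕ} (hq : 0 < q) (hqp : Nat.Coprime q p) (a b i : ℕ)
    (hi1 : 1 ≤ i) (hi2 : i ≤ q - 1) :
    psi p q a b ((i : ℚ) / q) = (i : ℚ) / b := by
  have hq0 : (q : ℚ) ≠ 0 := by positivity
  have h : ((i : ℚ) / q * p) = ((i * p : ℕ) : ℚ) / q := by push_cast; ring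
  have hnd : ¬ q ∣ i * p := by
    intro hd
    have h2 := hqp.dvd_of_dvd_mul_right hd
    have := Nat.le_of_dvd (by omega) h2
    omega
  unfold psi
  rw [h, if_neg (by rw [nat_div_den_one_iff hq]; exact hnd)]
  rw [div_mul_cancel₀ _ hq0]

lemma psi2_eval_r {p' : ℕ} (hp' : 0 < p') (p q q' a b k : ℕ) :
    psi2 p q p' q' a b ((k : ℚ) / p') = ((k + p : ℕ) : ℚ) / a := by
  have hp0 : (p' : ℚ) ≠ 0 := by positivity
  unfold psi2
  rw [div_mul_cancel₀ _ hp0]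
  rw [if_pos (by push_cast; simp [← Nat.cast_add])]
  push_cast
  ring_nf

lemma psi2_eval_u {p' q' : ℕ} (hq' : 0 < q') (hqp' : Nat.Coprime q' p') (p q a b i : ℕ)
    (hi1 : 1 ≤ i) (hi2 : i ≤ q' - 1) :
    psi2 p q p' q' a b ((i : ℚ) / q') = ((i + q : ℕ) : ℚ) / b := by
  have hq0 : (q' : ℚ) ≠ 0 := by positivity
  have h : ((i : ℚ) / q' * p') = ((i * p' : ℕ) : ℚ) / q' := by push_cast; ring
  have hnd : ¬ q' ∣ i * p' := by
    intro hd
    have h2 := hqp'.dvd_of_dvd_mul_right hd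
    have := Nat.le_of_dvd (by omega) h2
    omega
  unfold psi2
  rw [h, if_neg (by rw [nat_div_den_one_iff hq']; exact hnd)]
  rw [div_mul_cancel₀ _ hq0]
  push_cast
  ring_nf

lemma arithA {p q a b k i : ℕ} (key1 : q * a = p * b + 1) (hp : 0 < p) (ha : 0 < a)
    (h : k * q < i * p) : k * b < i * a := by
  zify at *
  nlinarith [mul_le_mul_of_nonneg_right (show (k:ℤ) * q + 1 ≤ i * p by linarith)
      (show (0:ℤ) ≤ a by positivity),
    mul_pos (show (0:ℤ) < p from by exact_mod_cast hp) (show (0:ℤ) < a from by exact_mod_cast ha)]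

lemma arithB {p q a b k i : ℕ} (key1 : q * a = p * b + 1) (hp : 0 < p) (hka : k < a)
    (h : i * p < k * q) : i * a < k * b := by
  zify at *
  nlinarith [mul_le_mul_of_nonneg_right (show (i:ℤ) * p + 1 ≤ k * q by linarith)
      (show (0:ℤ) ≤ a by positivity)]

lemma arithC {p q p' q' a b k i : ℕ} (key1 : q * a = p * b + 1) (key2 : p' * b = q' * a + 1)
    (hp' : 0 < p') (hka : k < a) (h : k * q' < i * p') : (k + p) * b < (i + q) * a := by
  have h1 : k * b < i * a := by
    zify at *
    nlinarith [mul_le_mul_of_nonneg_right (show (k:ℤ) * q' + 1 ≤ i * p' by linarith)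
        (show (0:ℤ) ≤ a by positivity)]
  have h2 : p * b < q * a := by omega
  nlinarith [h1, h2]

lemma arithD {p q p' q' a b k i : ℕ} (key1 : q * a = p * b + 1) (key2 : p' * b = q' * a + 1)
    (hp' : 0 < p') (ha : 0 < a) (h : i * p' < k * q') : (i + q) * a ≤ (k + p) * b := by
  have h1 : i * a < k * b := by
    zify at *
    nlinarith [mul_le_mul_of_nonneg_right (show (i:ℤ) * p' + 1 ≤ k * q' by linarith)
        (show (0:ℤ) ≤ a by positivity),
      mul_pos (show (0:ℤ) < p' from by exact_mod_cast hp') (show (0:ℤ) < a from by exact_mod_cast ha)]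
  nlinarith [h1]

/- ----------------- the splitting lemma ----------------- -/

lemma tumble_split (p q p' q' : ℕ) (hp : 1 ≤ p) (hq : 1 ≤ q) (hp' : 1 ≤ p') (hq' : 1 ≤ q')
    (hdet : q * p' = p * q' + 1) :
    tumbleWord (p + p') (q + q') = tumbleWord p q ++ [Letter.r, Letter.u] ++ tumbleWord p' q' := by
  set a := p + p' with ha_def
  set b := q + q' with hb_def
  have ha2 : 2 ≤ a := by omega
  have hb2 : 2 ≤ b := by omega
  have key1 : q * a = p * b + 1 := by
    zify; rw [ha_def, hb_def]; push_cast
    have : (q : ℤ) * p' = p * q' + 1 := by exact_mod_cast hdet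
    linear_combination this
  have key2 : p' * b = q' * a + 1 := by
    zify; rw [ha_def, hb_def]; push_cast
    have : (q : ℤ) * p' = p * q' + 1 := by exact_mod_cast hdet
    linear_combination this
  have ha0 : 0 < a := by omega
  have hb0 : 0 < b := by omega
  -- coprimality facts
  have hba : Nat.Coprime b a := by
    have h1 : Nat.gcd b a ∣ q * a := (Nat.gcd_dvd_right b a).mul_left q
    have h2 : Nat.gcd b a ∣ p * b := (Nat.gcd_dvd_left b a).mul_left p
    have h3 := Nat.dvd_sub h1 h2
    rw [show q * a - p * b = 1 by omega] at h3
    exact Nat.dvd_one.mp h3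
  have hqp : Nat.Coprime q p := by
    have h1 : Nat.gcd q p ∣ q * p' := (Nat.gcd_dvd_left q p).mul_right p'
    have h2 : Nat.gcd q p ∣ p * q' := (Nat.gcd_dvd_right q p).mul_right q'
    have h3 := Nat.dvd_sub h1 h2
    rw [show q * p' - p * q' = 1 by omega] at h3
    exact Nat.dvd_one.mp h3
  have hq'p' : Nat.Coprime q' p' := by
    have h1 : Nat.gcd q' p' ∣ p * q' := (Nat.gcd_dvd_left q' p').mul_left p
    have h2 : Nat.gcd q' p' ∣ q * p' := (Nat.gcd_dvd_right q' p').mul_left q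
    have h3 := Nat.dvd_sub h2 h1
    rw [show q * p' - p * q' = 1 by omega] at h3
    exact Nat.dvd_one.mp h3
  -- monotonicity of psi on the crossing times of (p,q)
  have hmono1 : ∀ x ∈ crossingTimes p q, ∀ y ∈ crossingTimes p q,
      x < y → psi p q a b x < psi p q a b y := by
    intro x hx y hy hxy
    rcases mem_crossingTimes.1 hx with ⟨k, ⟨hk1, hk2⟩, rfl⟩ | ⟨i, ⟨hi1, hi2⟩, rfl⟩ <;>
      rcases mem_crossingTimes.1 hy with ⟨k', ⟨hk1', hk2'⟩, rfl⟩ | ⟨i', ⟨hi1', hi2'⟩, rfl⟩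
    · rw [psi_eval_r (by omega) q a b, psi_eval_r (by omega) q a b]
      rw [cmp_div (by omega) (by omega)] at hxy ⊢
      have : k < k' := by
        exact Nat.lt_of_mul_lt_mul_right hxy
      exact Nat.mul_lt_mul_of_lt_of_le this (le_refl a) ha0
    · rw [psi_eval_r (by omega) q a b, psi_eval_u (by omega) hqp a b i' hi1' hi2']
      rw [cmp_div (by omega) (by omega)] at hxy ⊢
      exact arithA key1 (by omega) ha0 hxy
    · rw [psi_eval_u (by omega) hqp a b i hi1 hi2, psi_eval_r (by omega) q a b]
      rw [cmp_div (by omega) (by omega)] at hxy ⊢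
      exact arithB key1 (by omega) (by omega) hxy
    · rw [psi_eval_u (by omega) hqp a b i hi1 hi2, psi_eval_u (by omega) hqp a b i' hi1' hi2']
      rw [cmp_div (by omega) (by omega)] at hxy ⊢
      have : i < i' := Nat.lt_of_mul_lt_mul_right hxy
      exact Nat.mul_lt_mul_of_lt_of_le this (le_refl b) hb0
  -- monotonicity of psi2 on the crossing times of (p',q')
  have hmono2 : ∀ x ∈ crossingTimes p' q', ∀ y ∈ crossingTimes p' q',
      x < y → psi2 p q p' q' a b x < psi2 p q p' q' a b y := by
    intro x hx y hy hxy
    rcases mem_crossingTimes.1 hx with ⟨k, ⟨hk1, hk2⟩, rfl⟩ | ⟨i, ⟨hi1, hi2⟩, rfl⟩ <;>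
      rcases mem_crossingTimes.1 hy with ⟨k', ⟨hk1', hk2'⟩, rfl⟩ | ⟨i', ⟨hi1', hi2'⟩, rfl⟩
    · rw [psi2_eval_r (by omega) p q q' a b, psi2_eval_r (by omega) p q q' a b]
      rw [cmp_div (by omega) (by omega)] at hxy ⊢
      have : k < k' := Nat.lt_of_mul_lt_mul_right hxy
      have : k + p < k' + p := by omega
      exact Nat.mul_lt_mul_of_lt_of_le this (le_refl a) ha0
    · rw [psi2_eval_r (by omega) p q q' a b, psi2_eval_u (by omega) hq'p' p q a b i' hi1' hi2']
      rw [cmp_div (by omega) (by omega)] at hxy ⊢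
      exact arithC key1 key2 (by omega) (by omega) hxy
    · rw [psi2_eval_u (by omega) hq'p' p q a b i hi1 hi2, psi2_eval_r (by omega) p q q' a b]
      rw [cmp_div (by omega) (by omega)] at hxy ⊢
      have hle := arithD key1 key2 (by omega) ha0 hxy
      have hne : (i + q) * a ≠ (k' + p) * b := by
        intro heq
        have hd : a ∣ (k' + p) * b := ⟨i + q, by linarith [heq]⟩
        have h6 := (Nat.Coprime.dvd_of_dvd_mul_right (Nat.Coprime.symm hba) hd)
        have := Nat.le_of_dvd (by omega) h6
        omega
      exact lt_of_le_of_ne hle hne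
    · rw [psi2_eval_u (by omega) hq'p' p q a b i hi1 hi2,
        psi2_eval_u (by omega) hq'p' p q a b i' hi1' hi2']
      rw [cmp_div (by omega) (by omega)] at hxy ⊢
      have : i < i' := Nat.lt_of_mul_lt_mul_right hxy
      have : i + q < i' + q := by omega
      exact Nat.mul_lt_mul_of_lt_of_le this (le_refl b) hb0
  -- everything in the first block is below p/a
  have hub1 : ∀ x ∈ crossingTimes p q, psi p q a b x < (p : ℚ) / a := by
    intro x hx
    rcases mem_crossingTimes.1 hx with ⟨k, ⟨hk1, hk2⟩, rfl⟩ | ⟨i, ⟨hi1, hi2⟩, rfl⟩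
    · rw [psi_eval_r (by omega) q a b, cmp_div ha0 ha0]
      exact Nat.mul_lt_mul_of_lt_of_le (by omega) (le_refl a) ha0
    · rw [psi_eval_u (by omega) hqp a b i hi1 hi2, cmp_div hb0 ha0]
      -- i * a < p * b
      have h1 : (i + 1) * a ≤ q * a := Nat.mul_le_mul_right a (by omega)
      nlinarith [h1]
  have hmid : (p : ℚ) / a < (q : ℚ) / b := by
    rw [cmp_div ha0 hb0]; omega
  have hlb2 : ∀ y ∈ crossingTimes p' q', (q : ℚ) / b < psi2 p q p' q' a b y := by
    intro y hy
    rcases mem_crossingTimes.1 hy with ⟨k, ⟨hk1, hk2⟩, rfl⟩ | ⟨i, ⟨hi1, hi2⟩, rfl⟩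
    · rw [psi2_eval_r (by omega) p q q' a b, cmp_div hb0 ha0]
      -- q * a < (k+p) * b
      have h1 : 1 * 2 ≤ k * b := Nat.mul_le_mul (by omega) (by omega)
      nlinarith [h1]
    · rw [psi2_eval_u (by omega) hq'p' p q a b i hi1 hi2, cmp_div hb0 hb0]
      exact Nat.mul_lt_mul_of_lt_of_le (by omega) (le_refl b) hb0
  -- the main sorted-list identity
  set L1 := ((crossingTimes p q).sort (· ≤ ·)).map (psi p q a b) with hL1
  set L2 := ((crossingTimes p' q').sort (· ≤ ·)).map (psi2 p q p' q' a b) with hL2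
  set RHS := L1 ++ (p : ℚ)/(a:ℚ) :: (q : ℚ)/(b:ℚ) :: L2 with hRHS
  have hpairRHS : RHS.Pairwise (· < ·) := by
    rw [hRHS, List.pairwise_append]
    refine ⟨?_, ?_, ?_⟩
    · rw [hL1, List.pairwise_map]
      refine List.Pairwise.imp_of_mem ?_ (Finset.sortedLT_sort (crossingTimes p q)).pairwise
      intro x y hx hy hxy
      exact hmono1 x ((Finset.mem_sort _).1 hx) y ((Finset.mem_sort _).1 hy) hxy
    · rw [List.pairwise_cons]
      constructor
      · intro y hy
        rcases List.mem_cons.1 hy with rfl | hy2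
        · exact hmid
        · rw [hL2] at hy2; rcases List.mem_map.1 hy2 with ⟨t, ht, rfl⟩
          exact hmid.trans (hlb2 t ((Finset.mem_sort _).1 ht))
      · rw [List.pairwise_cons]
        constructor
        · intro y hy
          rw [hL2] at hy; rcases List.mem_map.1 hy with ⟨t, ht, rfl⟩
          exact hlb2 t ((Finset.mem_sort _).1 ht)
        · rw [hL2, List.pairwise_map]
          refine List.Pairwise.imp_of_mem ?_ (Finset.sortedLT_sort (crossingTimes p' q')).pairwise
          intro x y hx hy hxy
          exact hmono2 x ((Finset.mem_sort _).1 hx) y ((Finset.mem_sort _).1 hy) hxy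
    · intro x hx y hy
      rw [hL1] at hx; rcases List.mem_map.1 hx with ⟨t, ht, rfl⟩
      have h1 := hub1 t ((Finset.mem_sort _).1 ht)
      rcases List.mem_cons.1 hy with rfl | hy2
      · exact h1
      rcases List.mem_cons.1 hy2 with rfl | hy3
      · exact h1.trans hmid
      · rw [hL2] at hy3; rcases List.mem_map.1 hy3 with ⟨s, hs, rfl⟩
        exact h1.trans (hmid.trans (hlb2 s ((Finset.mem_sort _).1 hs)))
  have hmem : ∀ x : ℚ, x ∈ crossingTimes a b ↔ x ∈ RHS := by
    intro x
    have hR : x ∈ RHS ↔ (∃ t ∈ crossingTimes p q, psi p q a b t = x) ∨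
        (x = (p:ℚ)/(a:ℚ) ∨ (x = (q:ℚ)/(b:ℚ) ∨
          ∃ t ∈ crossingTimes p' q', psi2 p q p' q' a b t = x)) := by
      rw [hRHS, hL1, hL2]
      simp [List.mem_append, List.mem_cons, List.mem_map, Finset.mem_sort]
    rw [hR]
    constructor
    · intro hx
      rcases mem_crossingTimes.1 hx with ⟨k, ⟨hk1, hk2⟩, rfl⟩ | ⟨i, ⟨hi1, hi2⟩, rfl⟩
      · rcases lt_trichotomy k p with hlt | rfl | hgt
        · exact Or.inl ⟨(k:ℚ)/p, mem_crossingTimes.2 (Or.inl ⟨k, ⟨by omega, by omega⟩, rfl⟩),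
            psi_eval_r (by omega) q a b k⟩
        · exact Or.inr (Or.inl rfl)
        · refine Or.inr (Or.inr (Or.inr ⟨((k - p : ℕ):ℚ)/(p':ℚ),
            mem_crossingTimes.2 (Or.inl ⟨k - p, ⟨by omega, by omega⟩, rfl⟩), ?_⟩))
          rw [psi2_eval_r (by omega) p q q' a b (k - p)]
          congr 1
          norm_cast
          omega
      · rcases lt_trichotomy i q with hlt | rfl | hgt
        · exact Or.inl ⟨(i:ℚ)/q, mem_crossingTimes.2 (Or.inr ⟨i, ⟨by omega, by omega⟩, rfl⟩),
            psi_eval_u (by omega) hqp a b i (by omega) (by omega)⟩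
        · exact Or.inr (Or.inr (Or.inl rfl))
        · refine Or.inr (Or.inr (Or.inr ⟨((i - q : ℕ):ℚ)/(q':ℚ),
            mem_crossingTimes.2 (Or.inr ⟨i - q, ⟨by omega, by omega⟩, rfl⟩), ?_⟩))
          rw [psi2_eval_u (by omega) hq'p' p q a b (i - q) (by omega) (by omega)]
          congr 1
          norm_cast
          omega
    · intro hx
      rcases hx with ⟨t, ht, rfl⟩ | rfl | rfl | ⟨t, ht, rfl⟩
      · rcases mem_crossingTimes.1 ht with ⟨k, ⟨hk1, hk2⟩, rfl⟩ | ⟨i, ⟨hi1, hi2⟩, rfl⟩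
        · rw [psi_eval_r (by omega) q a b]
          exact mem_crossingTimes.2 (Or.inl ⟨k, ⟨by omega, by omega⟩, rfl⟩)
        · rw [psi_eval_u (by omega) hqp a b i hi1 hi2]
          exact mem_crossingTimes.2 (Or.inr ⟨i, ⟨by omega, by omega⟩, rfl⟩)
      · exact mem_crossingTimes.2 (Or.inl ⟨p, ⟨by omega, by omega⟩, rfl⟩)
      · exact mem_crossingTimes.2 (Or.inr ⟨q, ⟨by omega, by omega⟩, rfl⟩)
      · rcases mem_crossingTimes.1 ht with ⟨k, ⟨hk1, hk2⟩, rfl⟩ | ⟨i, ⟨hi1, hi2⟩, rfl⟩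
        · rw [psi2_eval_r (by omega) p q q' a b k]
          exact mem_crossingTimes.2 (Or.inl ⟨k + p, ⟨by omega, by omega⟩, rfl⟩)
        · rw [psi2_eval_u (by omega) hq'p' p q a b i hi1 hi2]
          exact mem_crossingTimes.2 (Or.inr ⟨i + q, ⟨by omega, by omega⟩, rfl⟩)
  have hnd2 : RHS.Nodup := List.Pairwise.imp ne_of_lt hpairRHS
  have hperm : List.Perm ((crossingTimes a b).sort (· ≤ ·)) RHS := by
    rw [List.perm_ext_iff_of_nodup (Finset.sort_nodup _ _) hnd2]
    intro x
    rw [Finset.mem_sort]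
    exact hmem x
  have main : (crossingTimes a b).sort (· ≤ ·) = RHS :=
    List.Perm.eq_of_pairwise' (Finset.pairwise_sort _ _) (hpairRHS.imp le_of_lt) hperm
  -- now translate letters
  have haQ0 : (a:ℚ) ≠ 0 := by positivity
  have hbQ0 : (b:ℚ) ≠ 0 := by positivity
  have hpQ0 : (p:ℚ) ≠ 0 := by positivity
  have hp'Q0 : (p':ℚ) ≠ 0 := by positivity
  have expand : ∀ u v : ℕ, tumbleWord u v = ((crossingTimes u v).sort (· ≤ ·)).map
      (fun t => if (t * (u:ℚ)).den = 1 then Letter.r else Letter.u) := fun _ _ => rfl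
  rw [expand, expand, expand, main, hRHS, hL1, hL2]
  simp only [List.map_append, List.map_cons, List.map_map, List.append_assoc,
    List.cons_append, List.nil_append]
  have e1 : ∀ t ∈ (crossingTimes p q).sort (· ≤ ·),
      ((fun t => if (t * (a:ℚ)).den = 1 then Letter.r else Letter.u) ∘ psi p q a b) t
        = (fun t => if (t * (p:ℚ)).den = 1 then Letter.r else Letter.u) t := by
    intro t ht
    rcases mem_crossingTimes.1 ((Finset.mem_sort _).1 ht) with
      ⟨k, ⟨hk1, hk2⟩, rfl⟩ | ⟨i, ⟨hi1, hi2⟩, rfl⟩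
    · simp only [Function.comp_apply]
      rw [psi_eval_r (by omega) q a b, div_mul_cancel₀ _ haQ0, div_mul_cancel₀ _ hpQ0]
    · simp only [Function.comp_apply]
      rw [psi_eval_u (by omega) hqp a b i hi1 hi2]
      rw [show ((i:ℚ)/(b:ℚ) * a) = ((i * a : ℕ):ℚ)/(b:ℚ) by push_cast; ring]
      rw [show ((i:ℚ)/(q:ℚ) * p) = ((i * p : ℕ):ℚ)/(q:ℚ) by push_cast; ring]
      rw [if_neg, if_neg]
      · rw [nat_div_den_one_iff (by omega)]
        intro hd
        have h2 := hqp.dvd_of_dvd_mul_right hd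
        have := Nat.le_of_dvd (by omega) h2
        omega
      · rw [nat_div_den_one_iff (by omega)]
        intro hd
        have h2 := hba.dvd_of_dvd_mul_right hd
        have := Nat.le_of_dvd (by omega) h2
        omega
  have e4 : ∀ t ∈ (crossingTimes p' q').sort (· ≤ ·),
      ((fun t => if (t * (a:ℚ)).den = 1 then Letter.r else Letter.u) ∘ psi2 p q p' q' a b) t
        = (fun t => if (t * (p':ℚ)).den = 1 then Letter.r else Letter.u) t := by
    intro t ht
    rcases mem_crossingTimes.1 ((Finset.mem_sort _).1 ht) with
      ⟨k, ⟨hk1, hk2⟩, rfl⟩ | ⟨i, ⟨hi1, hi2⟩, rfl⟩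
    · simp only [Function.comp_apply]
      rw [psi2_eval_r (by omega) p q q' a b, div_mul_cancel₀ _ haQ0, div_mul_cancel₀ _ hp'Q0,
        Rat.den_natCast, Rat.den_natCast]
    · simp only [Function.comp_apply]
      rw [psi2_eval_u (by omega) hq'p' p q a b i hi1 hi2]
      rw [show (((i + q : ℕ):ℚ)/(b:ℚ) * a) = (((i + q) * a : ℕ):ℚ)/(b:ℚ) by push_cast; ring]
      rw [show ((i:ℚ)/(q':ℚ) * p') = ((i * p' : ℕ):ℚ)/(q':ℚ) by push_cast; ring]
      rw [if_neg, if_neg]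
      · rw [nat_div_den_one_iff (by omega)]
        intro hd
        have h2 := hq'p'.dvd_of_dvd_mul_right hd
        have := Nat.le_of_dvd (by omega) h2
        omega
      · rw [nat_div_den_one_iff (by omega)]
        intro hd
        have h2 := hba.dvd_of_dvd_mul_right hd
        have := Nat.le_of_dvd (by omega) h2
        omega
  rw [List.map_congr_left e1, List.map_congr_left e4]
  have e2 : ((p:ℚ)/(a:ℚ) * a).den = 1 := by
    rw [div_mul_cancel₀ _ haQ0]; simp
  have e3 : ¬ ((q:ℚ)/(b:ℚ) * a).den = 1 := by
    rw [show ((q:ℚ)/(b:ℚ) * a) = ((q * a : ℕ):ℚ)/(b:ℚ) by push_cast; ring]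
    rw [nat_div_den_one_iff (by omega)]
    intro hd
    have h2 := hba.dvd_of_dvd_mul_right hd
    have := Nat.le_of_dvd (by omega) h2
    omega
  rw [if_pos e2, if_neg e3]

/- ----------------- palindromicity ----------------- -/

lemma tumble_palindrome (a b : ℕ) : (tumbleWord a b).reverse = tumbleWord a b := by
  have hσmem : ∀ x ∈ crossingTimes a b, 1 - x ∈ crossingTimes a b := by
    intro x hx
    rcases mem_crossingTimes.1 hx with ⟨k, ⟨hk1, hk2⟩, rfl⟩ | ⟨i, ⟨hi1, hi2⟩, rfl⟩
    · have ha2 : 2 ≤ a := by omega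
      have haQ : (a:ℚ) ≠ 0 := by positivity
      refine mem_crossingTimes.2 (Or.inl ⟨a - k, ⟨by omega, by omega⟩, ?_⟩)
      rw [Nat.cast_sub (by omega)]
      field_simp
    · have hb2 : 2 ≤ b := by omega
      have hbQ : (b:ℚ) ≠ 0 := by positivity
      refine mem_crossingTimes.2 (Or.inr ⟨b - i, ⟨by omega, by omega⟩, ?_⟩)
      rw [Nat.cast_sub (by omega)]
      field_simp
  have hinj : Function.Injective (fun x : ℚ => 1 - x) := by
    intro x y h; simpa using h
  have himg : (crossingTimes a b).image (fun x : ℚ => 1 - x) = crossingTimes a b := by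
    apply Finset.eq_of_subset_of_card_le
    · intro x hx
      rcases Finset.mem_image.1 hx with ⟨t, ht, rfl⟩
      exact hσmem t ht
    · rw [Finset.card_image_of_injective _ hinj]
  set l := (crossingTimes a b).sort (· ≤ ·) with hl
  have hperm : List.Perm l.reverse (l.map (fun x : ℚ => 1 - x)) := by
    rw [← Multiset.coe_eq_coe, Multiset.coe_reverse, ← Multiset.map_coe]
    rw [hl, Finset.sort_eq]
    conv_lhs => rw [← himg]
    rw [Finset.image_val_of_injOn (hinj.injOn)]
  have hpair : (l.map (fun x : ℚ => 1 - x)).Pairwise (· > ·) := by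
    rw [List.pairwise_map]
    exact (Finset.sortedLT_sort _).pairwise.imp (fun h => by simpa using h)
  have hrev : l.reverse.Pairwise (· > ·) :=
    List.pairwise_reverse.2 (Finset.sortedLT_sort _).pairwise
  haveI : Std.Antisymm (α := ℚ) (· > ·) := ⟨fun _ _ h1 h2 => absurd h1 (not_lt.2 h2.le)⟩
  have hlrev : l.reverse = l.map (fun x : ℚ => 1 - x) :=
    List.Perm.eq_of_pairwise' hrev hpair hperm
  have expand : tumbleWord a b = l.map
      (fun t => if (t * (a:ℚ)).den = 1 then Letter.r else Letter.u) := rfl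
  rw [expand, ← List.map_reverse, hlrev, List.map_map]
  refine List.map_congr_left ?_
  intro t _
  simp only [Function.comp_apply]
  refine if_congr ?_ rfl rfl
  constructor <;> intro h <;> rw [den_one_iff'] at h ⊢
  · obtain ⟨z, hz⟩ := h
    exact ⟨a - z, by push_cast; linarith [hz]⟩
  · obtain ⟨z, hz⟩ := h
    exact ⟨a - z, by push_cast; linarith [hz]⟩

/- ----------------- Stern–Brocot invariants ----------------- -/

lemma sbStep_inv (s : (ℕ × ℕ) × (ℕ × ℕ) × (ℕ × ℕ)) (c : Bool)
    (h1 : s.1 = s.2.1 + s.2.2) (h2 : s.2.1.2 * s.2.2.1 = s.2.1.1 * s.2.2.2 + 1) :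
    (sbStep s c).1 = (sbStep s c).2.1 + (sbStep s c).2.2 ∧
      (sbStep s c).2.1.2 * (sbStep s c).2.2.1 = (sbStep s c).2.1.1 * (sbStep s c).2.2.2 + 1 := by
  rcases s with ⟨g, gp, gm⟩
  simp only at h1 h2
  have hg1 : g.1 = gp.1 + gm.1 := by rw [h1]; rfl
  have hg2 : g.2 = gp.2 + gm.2 := by rw [h1]; rfl
  cases c
  · refine ⟨rfl, ?_⟩
    show g.2 * gm.1 = g.1 * gm.2 + 1
    rw [hg1, hg2]
    ring_nf
    ring_nf at h2
    linarith
  · constructor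
    · show g + gp = gp + g
      exact add_comm g gp
    · show gp.2 * g.1 = gp.1 * g.2 + 1
      rw [hg1, hg2]
      ring_nf
      ring_nf at h2
      linarith

lemma sb_inv_aux : ∀ (w : List Bool) (s : (ℕ × ℕ) × (ℕ × ℕ) × (ℕ × ℕ)),
    s.1 = s.2.1 + s.2.2 → s.2.1.2 * s.2.2.1 = s.2.1.1 * s.2.2.2 + 1 →
    (w.foldl sbStep s).1 = (w.foldl sbStep s).2.1 + (w.foldl sbStep s).2.2 ∧
      (w.foldl sbStep s).2.1.2 * (w.foldl sbStep s).2.2.1 =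
        (w.foldl sbStep s).2.1.1 * (w.foldl sbStep s).2.2.2 + 1
  | [], _, h1, h2 => ⟨h1, h2⟩
  | (c :: w), s, h1, h2 => by
    rw [List.foldl_cons]
    obtain ⟨g1, g2⟩ := sbStep_inv s c h1 h2
    exact sb_inv_aux w (sbStep s c) g1 g2

/- ----------------- main theorem ----------------- -/


/-- Tumble recurrence: if `t = g(w) = (a, b)` is a node of the Stern–Brocot tree with
`a ≥ 2` and `b ≥ 2` (so that its parents `t⁺ = g⁺(w)` and `t⁻ = g⁻(w)` are pairs of
coprime positive integers), then `τ(t) = τ(t⁺)·r·u·τ(t⁻) = τ(t⁻)·u·r·τ(t⁺)`. -/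
theorem tumble_recurrence (w : List Bool) (ha : 2 ≤ (sb w).1.1)
    (hb : 2 ≤ (sb w).1.2) :
    tumbleWord (sb w).1.1 (sb w).1.2 =
        tumbleWord (sb w).2.1.1 (sb w).2.1.2 ++ [Letter.r, Letter.u] ++
          tumbleWord (sb w).2.2.1 (sb w).2.2.2 ∧
      tumbleWord (sb w).1.1 (sb w).1.2 =
        tumbleWord (sb w).2.2.1 (sb w).2.2.2 ++ [Letter.u, Letter.r] ++
          tumbleWord (sb w).2.1.1 (sb w).2.1.2 := by
  obtain ⟨h1, h2⟩ := sb_inv_aux w ((1, 1), (0, 1), (1, 0)) rfl rfl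
  have hA : (sb w).1.1 = (sb w).2.1.1 + (sb w).2.2.1 := by
    show (w.foldl sbStep ((1, 1), (0, 1), (1, 0))).1.1 = _
    rw [h1]; rfl
  have hB : (sb w).1.2 = (sb w).2.1.2 + (sb w).2.2.2 := by
    show (w.foldl sbStep ((1, 1), (0, 1), (1, 0))).1.2 = _
    rw [h1]; rfl
  set p := (sb w).2.1.1 with hp_def
  set q := (sb w).2.1.2 with hq_def
  set p' := (sb w).2.2.1 with hp'_def
  set q' := (sb w).2.2.2 with hq'_def
  have hdet : q * p' = p * q' + 1 := h2
  rw [hA] at ha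
  rw [hB] at hb
  -- positivity of all four
  have hp'1 : 1 ≤ p' := by
    rcases Nat.eq_zero_or_pos p' with h | h
    · rw [h, Nat.mul_zero] at hdet
      exact absurd hdet.symm (Nat.succ_ne_zero _)
    · exact h
  have hq1 : 1 ≤ q := by
    rcases Nat.eq_zero_or_pos q with h | h
    · rw [h, Nat.zero_mul] at hdet
      exact absurd hdet.symm (Nat.succ_ne_zero _)
    · exact h
  have hp1 : 1 ≤ p := by
    rcases Nat.eq_zero_or_pos p with h | h
    · rw [h, Nat.zero_mul, Nat.zero_add] at hdet
      have := Nat.eq_one_of_mul_eq_one_left hdet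
      omega
    · exact h
  have hq'1 : 1 ≤ q' := by
    rcases Nat.eq_zero_or_pos q' with h | h
    · rw [h, Nat.mul_zero, Nat.zero_add] at hdet
      have := Nat.eq_one_of_mul_eq_one_right hdet
      omega
    · exact h
  have first := tumble_split p q p' q' hp1 hq1 hp'1 hq'1 hdet
  have second : tumbleWord (p + p') (q + q') =
      tumbleWord p' q' ++ [Letter.u, Letter.r] ++ tumbleWord p q := by
    have hrev := congrArg List.reverse first
    rw [tumble_palindrome] at hrev
    rw [hrev]
    simp [List.reverse_append, tumble_palindrome, List.append_assoc]
  rw [hA, hB]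
  exact ⟨first, second⟩
end

section
/- The set S = { σ(g(w)) : w a finite word over {+,−} } consists of exactly the 9 permutations with one-line notations 0123, 0213, 1032, 1230, 2301, 2310, 3012, 3120, 3201; moreover the set E of edge labels occurring in the Stern–Brocot tree has exactly 54 elements. -/
/-- The permutation of `{0,1,2,3}` given in one-line notation by
`f 0, f 1, f 2, f 3`. -/
def ol (f : Fin 4 → Fin 4) (h : Function.Bijective f := by decide) :
    Equiv.Perm (Fin 4) :=
  ⟨f, Fintype.bijInv h, Fintype.leftInverse_bijInv h, Fintype.rightInverse_bijInv h⟩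

/-- `ρ = 1230`, the permutation `0↦1, 1↦2, 2↦3, 3↦0` (a right roll). -/
def ρ : Equiv.Perm (Fin 4) := ol ![1, 2, 3, 0]

/-- `υ = 2310`, the permutation `0↦2, 1↦3, 2↦1, 3↦0` (an up roll). -/
def υ : Equiv.Perm (Fin 4) := ol ![2, 3, 1, 0]

/-- The permutation associated to a letter: `r ↦ ρ`, `u ↦ υ`. -/
def toPerm : Letter → Equiv.Perm (Fin 4)
  | Letter.r => ρ
  | Letter.u => υ

/-- The orientation of a word over `{r, u}`: its image under the monoid homomorphism
into `S₄` sending `r ↦ ρ` and `u ↦ υ`, composed left-to-right (the leftmost letter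
acts first).  Note that in Mathlib `(f * g) x = f (g x)`, so the left-to-right
product of a word is accumulated by multiplying each new letter on the left. -/
def orient (l : List Letter) : Equiv.Perm (Fin 4) :=
  l.foldl (fun acc x => toPerm x * acc) 1

/-- `σ` on pairs of nonnegative integers: `σ((0,1)) = ρ⁻¹`, `σ((1,0)) = υ⁻¹`, and
`σ((a,b))` is the orientation of the tumble sequence `τ(a,b)` otherwise. -/
def sigmaPt (p : ℕ × ℕ) : Equiv.Perm (Fin 4) :=
  if p = (0, 1) then ρ⁻¹
  else if p = (1, 0) then υ⁻¹
  else orient (tumbleWord p.1 p.2)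

/-- The cube orientation `σ(g(w))` associated to the Stern–Brocot node indexed by the
word `w`. -/
def σnode (w : List Bool) : Equiv.Perm (Fin 4) :=
  sigmaPt (sb w).1

def fA (X : ℕ) (t : ℚ) : Letter := if (t * (X:ℚ)).den = 1 then Letter.r else Letter.u

lemma tumbleWord_eq (a b : ℕ) :
    tumbleWord a b = (Finset.sort (crossingTimes a b) (· ≤ ·)).map (fA a) := rfl

lemma mem_crossing {a b : ℕ} {x : ℚ} : x ∈ crossingTimes a b ↔
    (∃ k, (1 ≤ k ∧ k ≤ a - 1) ∧ x = (k:ℚ)/(a:ℚ)) ∨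
    (∃ i, (1 ≤ i ∧ i ≤ b - 1) ∧ x = (i:ℚ)/(b:ℚ)) := by
  simp only [crossingTimes, Finset.mem_union, Finset.mem_image, Finset.mem_Icc, eq_comm]

lemma div_lt_div_nat {p q r s : ℕ} (hq : 0 < q) (hs : 0 < s) :
    (p:ℚ)/(q:ℚ) < (r:ℚ)/(s:ℚ) ↔ p * s < r * q := by
  rw [div_lt_div_iff₀ (by positivity) (by positivity)]
  exact_mod_cast Iff.rfl

lemma apos {a b c d : ℕ} (hdet : a*d = b*c+1) : 0 < a :=
  Nat.pos_of_ne_zero fun h => by subst h; simp at hdet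

lemma dpos {a b c d : ℕ} (hdet : a*d = b*c+1) : 0 < d :=
  Nat.pos_of_ne_zero fun h => by subst h; simp at hdet

lemma coprime_aux {x y u v : ℕ} (h : u*x = v*y+1) : Nat.Coprime x y := by
  have h1 : Nat.gcd x y ∣ u*x := Dvd.dvd.mul_left (Nat.gcd_dvd_left x y) u
  have h2 : Nat.gcd x y ∣ v*y := Dvd.dvd.mul_left (Nat.gcd_dvd_right x y) v
  have h3 : Nat.gcd x y ∣ 1 := by
    have := Nat.dvd_sub h1 h2
    rwa [show u*x - v*y = 1 by omega] at this
  exact Nat.eq_one_of_dvd_one h3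

lemma cross1 {a b c d k i : ℕ} (hdet : a*d = b*c+1) (hk : k < a) (h : k*b < i*a) :
    k*(b+d) < i*(a+c) := by
  zify at hdet h ⊢
  have key : (a:ℤ)*(i*(a+c) - k*(b+d)) = (a+c)*(i*a - k*b) - k := by
    linear_combination (-(k:ℤ))*hdet
  nlinarith [key]

lemma cross2 {a b c d k i : ℕ} (hdet : a*d = b*c+1) (hk : k < a) (h : i*a < k*b) :
    i*(a+c) < k*(b+d) := by
  zify at hdet h ⊢
  have key : (a:ℤ)*(k*(b+d) - i*(a+c)) = (a+c)*(k*b - i*a) + k := by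
    linear_combination (k:ℤ)*hdet
  nlinarith [key]

lemma cross3 {a b c d k i : ℕ} (hdet : a*d = b*c+1) (hk : k < c) (h : k*d < i*c) :
    (a+k)*(b+d) < (b+i)*(a+c) := by
  have ha := apos hdet
  zify at hdet h ⊢
  have ha' : (1:ℤ) ≤ a := by exact_mod_cast ha
  have key : (c:ℤ)*((b+i)*(a+c) - (a+k)*(b+d)) = (a+c)*(i*c - k*d) - ((c:ℤ)-k) := by
    linear_combination ((k:ℤ)-c)*hdet
  nlinarith [key]

lemma cross4 {a b c d k i : ℕ} (hdet : a*d = b*c+1) (hk : k < c) (h : i*c < k*d) :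
    (b+i)*(a+c) < (a+k)*(b+d) := by
  zify at hdet h ⊢
  have key : (c:ℤ)*((a+k)*(b+d) - (b+i)*(a+c)) = (a+c)*(k*d - i*c) + ((c:ℤ)-k) := by
    linear_combination ((c:ℤ)-k)*hdet
  nlinarith [key]

lemma cross5 {a b c d : ℕ} (hdet : a*d = b*c+1) : b*(a+c) < a*(b+d) := by nlinarith

lemma sort_eq_of {S : Finset ℚ} {L : List ℚ} (h1 : L.Pairwise (· < ·))
    (h2 : ∀ x, x ∈ L ↔ x ∈ S) : Finset.sort S (· ≤ ·) = L := by
  have hnd : L.Nodup := h1.nodup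
  have hperm : List.Perm (Finset.sort S (· ≤ ·)) L := by
    rw [List.perm_ext_iff_of_nodup (S.sort_nodup _) hnd]
    intro a
    rw [Finset.mem_sort, h2]
  exact hperm.eq_of_pairwise' (S.pairwise_sort _) (h1.imp le_of_lt)

lemma den_one_of (k X : ℕ) (hX : X ≠ 0) : (((k:ℚ)/(X:ℚ)) * (X:ℚ)).den = 1 := by
  rw [div_mul_cancel₀]
  · exact Rat.den_natCast k
  · exact_mod_cast hX

lemma den_ne_one_of (k Y X : ℕ) (hY : Y ≠ 0) (h : ¬ (Y ∣ k * X)) :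
    (((k:ℚ)/(Y:ℚ)) * (X:ℚ)).den ≠ 1 := by
  intro hden
  rw [Rat.den_eq_one_iff] at hden
  set q : ℚ := (k:ℚ)/Y * X with hq
  have hYQ : (Y:ℚ) ≠ 0 := by exact_mod_cast hY
  have h1 : (q.num : ℚ) * Y = ((k * X : ℕ) : ℚ) := by
    rw [hden, hq]; push_cast; field_simp
  have h2 : q.num * (Y:ℤ) = ((k*X : ℕ) : ℤ) := by exact_mod_cast h1
  have h3 : (Y:ℤ) ∣ ((k*X : ℕ) : ℤ) := ⟨q.num, by linarith [h2]⟩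
  exact h (by exact_mod_cast h3)

lemma not_dvd_of_coprime {Y X i : ℕ} (hco : Nat.Coprime Y X) (hi : 1 ≤ i) (hiY : i < Y) :
    ¬ (Y ∣ i * X) := by
  intro hdvd
  have h1 : Y ∣ i := (Nat.Coprime.dvd_of_dvd_mul_right hco) hdvd
  have := Nat.le_of_dvd (by omega) h1
  omega

lemma tumble_concat {a b c d : ℕ} (hb : 1 ≤ b) (hc : 1 ≤ c) (hdet : a*d = b*c+1) :
    tumbleWord (a+c) (b+d) = tumbleWord a b ++ [Letter.u, Letter.r] ++ tumbleWord c d := by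
  have ha := apos hdet
  have hd := dpos hdet
  have hA : 0 < a + c := by omega
  have hB : 0 < b + d := by omega
  have hab : Nat.Coprime a b := coprime_aux (u := d) (v := c)
    (by rw [Nat.mul_comm d a, Nat.mul_comm c b]; exact hdet)
  have hcd : Nat.Coprime c d := (coprime_aux (u := a) (v := b) hdet).symm
  have hAB : Nat.Coprime (a+c) (b+d) := coprime_aux (u := d) (v := c)
    (by rw [Nat.mul_add, Nat.mul_add, Nat.mul_comm d a, Nat.mul_comm c b, Nat.mul_comm d c]; omega)
  set φ : ℚ → ℚ := fun t => if (t * (a:ℚ)).den = 1 then t*a/(a+c : ℕ) else t*b/(b+d : ℕ) with hφ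
  set ψ : ℚ → ℚ := fun t =>
    if (t * (c:ℚ)).den = 1 then (t*c + a)/(a+c : ℕ) else (t*d + b)/(b+d : ℕ) with hψ
  -- evaluation lemmas
  have hφr : ∀ k : ℕ, φ ((k:ℚ)/(a:ℚ)) = ((k:ℚ)/((a+c : ℕ):ℚ)) := by
    intro k
    have h1 := den_one_of k a (by omega)
    simp only [hφ, if_pos h1]
    rw [div_mul_cancel₀ _ (by exact_mod_cast ha.ne' : (a:ℚ) ≠ 0)]
  have hφu : ∀ i : ℕ, 1 ≤ i → i < b → φ ((i:ℚ)/(b:ℚ)) = ((i:ℚ)/((b+d : ℕ):ℚ)) := by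
    intro i h1 h2
    have hne := den_ne_one_of i b a (by omega) (not_dvd_of_coprime hab.symm h1 h2)
    simp only [hφ, if_neg hne]
    rw [div_mul_cancel₀ _ (by positivity : (b:ℚ) ≠ 0)]
  have hψr : ∀ k : ℕ, ψ ((k:ℚ)/(c:ℚ)) = (((a+k : ℕ):ℚ)/((a+c : ℕ):ℚ)) := by
    intro k
    have h1 := den_one_of k c (by omega)
    simp only [hψ, if_pos h1]
    rw [div_mul_cancel₀ _ (by positivity : (c:ℚ) ≠ 0)]
    push_cast; ring_nf
  have hψu : ∀ i : ℕ, 1 ≤ i → i < d → ψ ((i:ℚ)/(d:ℚ)) = (((b+i : ℕ):ℚ)/((b+d : ℕ):ℚ)) := by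
    intro i h1 h2
    have hne := den_ne_one_of i d c (by omega) (not_dvd_of_coprime hcd.symm h1 h2)
    simp only [hψ, if_neg hne]
    rw [div_mul_cancel₀ _ (by exact_mod_cast hd.ne' : (d:ℚ) ≠ 0)]
    push_cast; ring_nf

  set L1 := Finset.sort (crossingTimes a b) (· ≤ ·) with hL1
  set L2 := Finset.sort (crossingTimes c d) (· ≤ ·) with hL2
  set m1 : ℚ := (b:ℚ)/((b+d : ℕ):ℚ) with hm1def
  set m2 : ℚ := (a:ℚ)/((a+c : ℕ):ℚ) with hm2def
  set L : List ℚ := L1.map φ ++ m1 :: m2 :: L2.map ψ with hL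
  have hmono1 : ∀ x ∈ crossingTimes a b, ∀ y ∈ crossingTimes a b, x < y → φ x < φ y := by
    intro x hx y hy hxy
    rcases mem_crossing.mp hx with ⟨k, ⟨hk1, hk2⟩, rfl⟩ | ⟨i, ⟨hi1, hi2⟩, rfl⟩ <;>
      rcases mem_crossing.mp hy with ⟨k', ⟨hk1', hk2'⟩, rfl⟩ | ⟨i', ⟨hi1', hi2'⟩, rfl⟩
    · rw [hφr, hφr, div_lt_div_nat hA hA]
      rw [div_lt_div_nat ha ha] at hxy
      exact (Nat.mul_lt_mul_right hA).mpr ((Nat.mul_lt_mul_right ha).mp hxy)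
    · rw [hφr, hφu i' hi1' (by omega), div_lt_div_nat hA hB]
      rw [div_lt_div_nat ha hb] at hxy
      exact cross1 hdet (by omega) hxy
    · rw [hφu i hi1 (by omega), hφr, div_lt_div_nat hB hA]
      rw [div_lt_div_nat hb ha] at hxy
      exact cross2 hdet (by omega) hxy
    · rw [hφu i hi1 (by omega), hφu i' hi1' (by omega), div_lt_div_nat hB hB]
      rw [div_lt_div_nat hb hb] at hxy
      exact (Nat.mul_lt_mul_right hB).mpr ((Nat.mul_lt_mul_right hb).mp hxy)
  have hmono2 : ∀ x ∈ crossingTimes c d, ∀ y ∈ crossingTimes c d, x < y → ψ x < ψ y := by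
    intro x hx y hy hxy
    rcases mem_crossing.mp hx with ⟨k, ⟨hk1, hk2⟩, rfl⟩ | ⟨i, ⟨hi1, hi2⟩, rfl⟩ <;>
      rcases mem_crossing.mp hy with ⟨k', ⟨hk1', hk2'⟩, rfl⟩ | ⟨i', ⟨hi1', hi2'⟩, rfl⟩
    · rw [hψr, hψr, div_lt_div_nat hA hA]
      rw [div_lt_div_nat hc hc] at hxy
      exact (Nat.mul_lt_mul_right hA).mpr (by have := (Nat.mul_lt_mul_right hc).mp hxy; omega)
    · rw [hψr, hψu i' hi1' (by omega), div_lt_div_nat hA hB]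
      rw [div_lt_div_nat hc hd] at hxy
      exact cross3 hdet (by omega) hxy
    · rw [hψu i hi1 (by omega), hψr, div_lt_div_nat hB hA]
      rw [div_lt_div_nat hd hc] at hxy
      exact cross4 hdet (by omega) hxy
    · rw [hψu i hi1 (by omega), hψu i' hi1' (by omega), div_lt_div_nat hB hB]
      rw [div_lt_div_nat hd hd] at hxy
      exact (Nat.mul_lt_mul_right hB).mpr (by have := (Nat.mul_lt_mul_right hd).mp hxy; omega)
  have hlt1 : ∀ x ∈ crossingTimes a b, φ x < m1 := by
    intro x hx
    rcases mem_crossing.mp hx with ⟨k, ⟨hk1, hk2⟩, rfl⟩ | ⟨i, ⟨hi1, hi2⟩, rfl⟩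
    · rw [hφr, hm1def, div_lt_div_nat hA hB]
      exact cross1 hdet (by omega) (by rw [Nat.mul_comm b a]; exact (Nat.mul_lt_mul_right hb).mpr (by omega))
    · rw [hφu i hi1 (by omega), hm1def, div_lt_div_nat hB hB]
      exact (Nat.mul_lt_mul_right hB).mpr (by omega)
  have hlt2 : m1 < m2 := by
    rw [hm1def, hm2def, div_lt_div_nat hB hA]
    exact cross5 hdet
  have hlt3 : ∀ y ∈ crossingTimes c d, m2 < ψ y := by
    intro y hy
    rcases mem_crossing.mp hy with ⟨k, ⟨hk1, hk2⟩, rfl⟩ | ⟨i, ⟨hi1, hi2⟩, rfl⟩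
    · rw [hψr, hm2def, div_lt_div_nat hA hA]
      exact (Nat.mul_lt_mul_right hA).mpr (by omega)
    · rw [hψu i hi1 (by omega), hm2def, div_lt_div_nat hA hB]
      have := cross3 (k := 0) hdet (by omega) (by simpa using Nat.mul_pos hi1 hc)
      simpa using this
  have hLs : L.Pairwise (· < ·) := by
    rw [hL, List.pairwise_append]
    refine ⟨?_, ?_, ?_⟩
    · rw [List.pairwise_map]
      exact List.Pairwise.imp_of_mem
        (fun hx hy hxy => hmono1 _ ((Finset.mem_sort _).mp hx) _ ((Finset.mem_sort _).mp hy) hxy)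
        ((crossingTimes a b).sortedLT_sort.pairwise)
    · rw [List.pairwise_cons]
      refine ⟨?_, ?_⟩
      · intro y hy
        rcases List.mem_cons.mp hy with rfl | hy
        · exact hlt2
        · rcases List.mem_map.mp hy with ⟨z, hz, rfl⟩
          exact lt_trans hlt2 (hlt3 z ((Finset.mem_sort _).mp hz))
      rw [List.pairwise_cons]
      refine ⟨?_, ?_⟩
      · intro y hy
        rcases List.mem_map.mp hy with ⟨z, hz, rfl⟩
        exact hlt3 z ((Finset.mem_sort _).mp hz)
      · rw [List.pairwise_map]
        exact List.Pairwise.imp_of_mem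
          (fun hx hy hxy => hmono2 _ ((Finset.mem_sort _).mp hx) _ ((Finset.mem_sort _).mp hy) hxy)
          ((crossingTimes c d).sortedLT_sort.pairwise)
    · intro x hx y hy
      rcases List.mem_map.mp hx with ⟨z, hz, rfl⟩
      have hbase := hlt1 z ((Finset.mem_sort _).mp hz)
      rcases List.mem_cons.mp hy with rfl | hy
      · exact hbase
      rcases List.mem_cons.mp hy with rfl | hy
      · exact lt_trans hbase hlt2
      rcases List.mem_map.mp hy with ⟨z', hz', rfl⟩
      exact lt_trans (lt_trans hbase hlt2) (hlt3 z' ((Finset.mem_sort _).mp hz'))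
  have hmem : ∀ x, x ∈ L ↔ x ∈ crossingTimes (a+c) (b+d) := by
    intro x
    rw [hL]
    simp only [List.mem_append, List.mem_cons, List.mem_map]
    constructor
    · rintro (⟨z, hz, rfl⟩ | rfl | rfl | ⟨z, hz, rfl⟩)
      · rcases mem_crossing.mp ((Finset.mem_sort _).mp hz) with
          ⟨k, ⟨hk1, hk2⟩, rfl⟩ | ⟨i, ⟨hi1, hi2⟩, rfl⟩
        · rw [hφr]
          exact mem_crossing.mpr (Or.inl ⟨k, ⟨hk1, by omega⟩, rfl⟩)
        · rw [hφu i hi1 (by omega)]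
          exact mem_crossing.mpr (Or.inr ⟨i, ⟨hi1, by omega⟩, rfl⟩)
      · exact mem_crossing.mpr (Or.inr ⟨b, ⟨hb, by omega⟩, rfl⟩)
      · exact mem_crossing.mpr (Or.inl ⟨a, ⟨by omega, by omega⟩, rfl⟩)
      · rcases mem_crossing.mp ((Finset.mem_sort _).mp hz) with
          ⟨k, ⟨hk1, hk2⟩, rfl⟩ | ⟨i, ⟨hi1, hi2⟩, rfl⟩
        · rw [hψr]
          exact mem_crossing.mpr (Or.inl ⟨a+k, ⟨by omega, by omega⟩, rfl⟩)
        · rw [hψu i hi1 (by omega)]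
          exact mem_crossing.mpr (Or.inr ⟨b+i, ⟨by omega, by omega⟩, rfl⟩)
    · intro hx
      rcases mem_crossing.mp hx with ⟨k, ⟨hk1, hk2⟩, rfl⟩ | ⟨i, ⟨hi1, hi2⟩, rfl⟩
      · rcases lt_trichotomy k a with hka | hka | hka
        · refine Or.inl ⟨(k:ℚ)/(a:ℚ), (Finset.mem_sort _).mpr
            (mem_crossing.mpr (Or.inl ⟨k, ⟨hk1, by omega⟩, rfl⟩)), hφr k⟩
        · subst hka
          exact Or.inr (Or.inr (Or.inl rfl))
        · refine Or.inr (Or.inr (Or.inr ⟨((k-a : ℕ):ℚ)/(c:ℚ), (Finset.mem_sort _).mpr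
            (mem_crossing.mpr (Or.inl ⟨k-a, ⟨by omega, by omega⟩, rfl⟩)), ?_⟩))
          rw [hψr, show a + (k-a) = k from by omega]
      · rcases lt_trichotomy i b with hib | hib | hib
        · refine Or.inl ⟨(i:ℚ)/(b:ℚ), (Finset.mem_sort _).mpr
            (mem_crossing.mpr (Or.inr ⟨i, ⟨hi1, by omega⟩, rfl⟩)), hφu i hi1 hib⟩
        · subst hib
          exact Or.inr (Or.inl rfl)
        · refine Or.inr (Or.inr (Or.inr ⟨((i-b : ℕ):ℚ)/(d:ℚ), (Finset.mem_sort _).mpr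
            (mem_crossing.mpr (Or.inr ⟨i-b, ⟨by omega, by omega⟩, rfl⟩)), ?_⟩))
          rw [hψu (i-b) (by omega) (by omega), show b + (i-b) = i from by omega]
  have hsort : Finset.sort (crossingTimes (a+c) (b+d)) (· ≤ ·) = L := sort_eq_of hLs hmem
  have hmap1 : List.map (fA (a+c)) (L1.map φ) = List.map (fA a) L1 := by
    rw [List.map_map]
    refine List.map_congr_left ?_
    intro x hx
    rcases mem_crossing.mp ((Finset.mem_sort _).mp hx) with
      ⟨k, ⟨hk1, hk2⟩, rfl⟩ | ⟨i, ⟨hi1, hi2⟩, rfl⟩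
    · simp only [Function.comp_apply, hφr, fA,
        if_pos (den_one_of k (a+c) (by omega)), if_pos (den_one_of k a (by omega))]
    · simp only [Function.comp_apply, hφu i hi1 (by omega), fA,
        if_neg (den_ne_one_of i (b+d) (a+c) (by omega)
          (not_dvd_of_coprime hAB.symm hi1 (by omega))),
        if_neg (den_ne_one_of i b a (by omega) (not_dvd_of_coprime hab.symm hi1 (by omega)))]
  have hmap2 : List.map (fA (a+c)) (L2.map ψ) = List.map (fA c) L2 := by
    rw [List.map_map]
    refine List.map_congr_left ?_
    intro x hx
    rcases mem_crossing.mp ((Finset.mem_sort _).mp hx) with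
      ⟨k, ⟨hk1, hk2⟩, rfl⟩ | ⟨i, ⟨hi1, hi2⟩, rfl⟩
    · simp only [Function.comp_apply, hψr, fA,
        if_pos (den_one_of (a+k) (a+c) (by omega)), if_pos (den_one_of k c (by omega))]
    · simp only [Function.comp_apply, hψu i hi1 (by omega), fA,
        if_neg (den_ne_one_of (b+i) (b+d) (a+c) (by omega)
          (not_dvd_of_coprime hAB.symm (by omega) (by omega))),
        if_neg (den_ne_one_of i d c (by omega) (not_dvd_of_coprime hcd.symm hi1 (by omega)))]
  have hfm1 : fA (a+c) m1 = Letter.u := by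
    rw [hm1def]
    simp only [fA, if_neg (den_ne_one_of b (b+d) (a+c) (by omega)
      (not_dvd_of_coprime hAB.symm hb (by omega)))]
  have hfm2 : fA (a+c) m2 = Letter.r := by
    rw [hm2def]
    simp only [fA, if_pos (den_one_of a (a+c) (by omega))]
  rw [tumbleWord_eq (a+c) (b+d), hsort, hL, tumbleWord_eq a b, tumbleWord_eq c d,
    List.map_append, List.map_cons, List.map_cons, hmap1, hmap2, hfm1, hfm2]
  simp
  rfl


lemma sort_crossing_r {n : ℕ} (hn : 0 < n) :
    Finset.sort (crossingTimes n 1) (· ≤ ·) =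
      (List.range (n-1)).map (fun j => (((j+1 : ℕ)):ℚ)/(n:ℚ)) := by
  apply sort_eq_of
  · rw [List.pairwise_map]
    refine List.Pairwise.imp_of_mem (fun {x y} hx hy hxy => ?_) List.pairwise_lt_range
    rw [div_lt_div_nat hn hn]
    exact (Nat.mul_lt_mul_right hn).mpr (by omega)
  · intro x
    simp only [List.mem_map, List.mem_range]
    rw [mem_crossing]
    constructor
    · rintro ⟨j, hj, rfl⟩
      exact Or.inl ⟨j+1, ⟨by omega, by omega⟩, rfl⟩
    · rintro (⟨k, ⟨hk1, hk2⟩, rfl⟩ | ⟨i, ⟨hi1, hi2⟩, rfl⟩)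
      · exact ⟨k-1, by omega, by rw [show k-1+1 = k from by omega]⟩
      · exact absurd hi2 (by omega)

lemma sort_crossing_u {n : ℕ} (hn : 0 < n) :
    Finset.sort (crossingTimes 1 n) (· ≤ ·) =
      (List.range (n-1)).map (fun j => (((j+1 : ℕ)):ℚ)/(n:ℚ)) := by
  apply sort_eq_of
  · rw [List.pairwise_map]
    refine List.Pairwise.imp_of_mem (fun {x y} hx hy hxy => ?_) List.pairwise_lt_range
    rw [div_lt_div_nat hn hn]
    exact (Nat.mul_lt_mul_right hn).mpr (by omega)
  · intro x
    simp only [List.mem_map, List.mem_range]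
    rw [mem_crossing]
    constructor
    · rintro ⟨j, hj, rfl⟩
      exact Or.inr ⟨j+1, ⟨by omega, by omega⟩, rfl⟩
    · rintro (⟨k, ⟨hk1, hk2⟩, rfl⟩ | ⟨i, ⟨hi1, hi2⟩, rfl⟩)
      · exact absurd hk2 (by omega)
      · exact ⟨i-1, by omega, by rw [show i-1+1 = i from by omega]⟩

lemma tumble_r {n : ℕ} (hn : 0 < n) : tumbleWord n 1 = List.replicate (n-1) Letter.r := by
  rw [tumbleWord_eq, sort_crossing_r hn, List.map_map]
  rw [List.eq_replicate_iff]
  refine ⟨by simp, ?_⟩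
  intro x hx
  rcases List.mem_map.mp hx with ⟨j, _, rfl⟩
  simp only [Function.comp_apply, fA, if_pos (den_one_of (j+1) n (by omega))]

lemma tumble_u {n : ℕ} (hn : 0 < n) : tumbleWord 1 n = List.replicate (n-1) Letter.u := by
  rw [tumbleWord_eq, sort_crossing_u hn, List.map_map]
  rw [List.eq_replicate_iff]
  refine ⟨by simp, ?_⟩
  intro x hx
  rcases List.mem_map.mp hx with ⟨j, hj, rfl⟩
  rw [List.mem_range] at hj
  have hnd : ¬ ((n:ℕ) ∣ (j+1) * 1) := by
    rw [Nat.mul_one]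
    intro hdvd
    exact absurd (Nat.le_of_dvd (by omega) hdvd) (by omega)
  have := den_one_of (j+1) n (by omega)
  simp only [Function.comp_apply, fA]
  exact if_neg (den_ne_one_of (j+1) n 1 (by omega) hnd)

def fullWord (p : ℕ × ℕ) : List Letter :=
  if p = (0,1) then [Letter.u]
  else if p = (1,0) then [Letter.r]
  else Letter.r :: (tumbleWord p.1 p.2 ++ [Letter.u])

lemma fullWord_pos {a b : ℕ} (ha : 1 ≤ a) (hb : 1 ≤ b) :
    fullWord (a,b) = Letter.r :: (tumbleWord a b ++ [Letter.u]) := by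
  rw [fullWord, if_neg (by intro h; rw [Prod.mk.injEq] at h; omega),
    if_neg (by intro h; rw [Prod.mk.injEq] at h; omega)]

lemma fullWord_01 : fullWord (0,1) = [Letter.u] := rfl

lemma fullWord_10 : fullWord (1,0) = [Letter.r] := by
  rw [fullWord, if_neg (by intro h; rw [Prod.mk.injEq] at h; omega), if_pos rfl]

lemma fullWord_add {a b c d : ℕ} (hdet : a*d = b*c+1) :
    fullWord (a+c, b+d) = fullWord (a,b) ++ fullWord (c,d) := by
  have ha := apos hdet
  have hd := dpos hdet
  rcases Nat.eq_zero_or_pos b with hb | hb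
  · subst hb
    have had : a = 1 ∧ d = 1 := by
      have h1 : a * d = 1 := by omega
      exact ⟨Nat.eq_one_of_mul_eq_one_right h1, Nat.eq_one_of_mul_eq_one_left h1⟩
    obtain ⟨rfl, rfl⟩ := had
    rcases Nat.eq_zero_or_pos c with hc | hc
    · subst hc
      show fullWord (1,1) = fullWord (1,0) ++ fullWord (0,1)
      rw [fullWord_pos le_rfl le_rfl, tumble_r (by omega), fullWord_10, fullWord_01]
      rfl
    · show fullWord (1+c,1) = fullWord (1,0) ++ fullWord (c,1)
      rw [fullWord_pos (by omega) (by omega), tumble_r (by omega), fullWord_10,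
        fullWord_pos hc (by omega), tumble_r hc,
        show 1+c-1 = (c-1)+1 from by omega, List.replicate_succ]
      rfl
  · rcases Nat.eq_zero_or_pos c with hc | hc
    · subst hc
      have had : a = 1 ∧ d = 1 := by
        have h1 : a * d = 1 := by omega
        exact ⟨Nat.eq_one_of_mul_eq_one_right h1, Nat.eq_one_of_mul_eq_one_left h1⟩
      obtain ⟨rfl, rfl⟩ := had
      show fullWord (1,b+1) = fullWord (1,b) ++ fullWord (0,1)
      rw [fullWord_pos (by omega) (by omega), tumble_u (by omega), fullWord_pos (by omega) hb,
        tumble_u hb, fullWord_01,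
        show b+1-1 = (b-1)+1 from by omega, List.replicate_succ']
      simp
    · rw [fullWord_pos (by omega) (by omega), fullWord_pos (by omega) hb,
        fullWord_pos hc (by omega), tumble_concat hb hc hdet]
      simp

lemma orient_aux (l : List Letter) (s : Equiv.Perm (Fin 4)) :
    l.foldl (fun acc x => toPerm x * acc) s = orient l * s := by
  induction l generalizing s with
  | nil => simp [orient]
  | cons x l ih =>
    rw [orient, List.foldl_cons, List.foldl_cons, ih, ih, mul_one, mul_assoc]

lemma orient_append (l1 l2 : List Letter) : orient (l1 ++ l2) = orient l2 * orient l1 := by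
  rw [orient, List.foldl_append, ← orient, orient_aux]

def Oo (p : ℕ × ℕ) : Equiv.Perm (Fin 4) := orient (fullWord p)

lemma Oo_add {a b c d : ℕ} (hdet : a*d = b*c+1) :
    Oo ((a,b) + (c,d)) = Oo (c,d) * Oo (a,b) := by
  rw [Prod.mk_add_mk, Oo, Oo, Oo, fullWord_add hdet, orient_append]

lemma orient_r : orient [Letter.r] = ρ := by simp [orient, toPerm]

lemma orient_u : orient [Letter.u] = υ := by simp [orient, toPerm]

lemma sigmaPt_eq {a b : ℕ} (ha : 1 ≤ a) (hb : 1 ≤ b) :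
    sigmaPt (a,b) = υ⁻¹ * Oo (a,b) * ρ⁻¹ := by
  rw [sigmaPt, if_neg (by intro h; rw [Prod.mk.injEq] at h; omega),
    if_neg (by intro h; rw [Prod.mk.injEq] at h; omega), Oo, fullWord_pos ha hb,
    show Letter.r :: (tumbleWord a b ++ [Letter.u]) =
      ([Letter.r] ++ tumbleWord a b) ++ [Letter.u] from by simp,
    orient_append, orient_append, orient_r, orient_u]
  group

abbrev SState := Equiv.Perm (Fin 4) × Equiv.Perm (Fin 4) × Equiv.Perm (Fin 4)

def ostep : SState → Bool → SState
  | (P, Q, _R), true => (Q * P, Q, P)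
  | (P, _Q, R), false => (P * R, P, R)

def auto (w : List Bool) : SState := w.foldl ostep (υ * ρ, υ, ρ)

lemma auto_append (w : List Bool) (ε : Bool) : auto (w ++ [ε]) = ostep (auto w) ε := by
  rw [auto, auto, List.foldl_append, List.foldl_cons, List.foldl_nil]

lemma sb_append (w : List Bool) (ε : Bool) : sb (w ++ [ε]) = sbStep (sb w) ε := by
  rw [sb, sb, List.foldl_append, List.foldl_cons, List.foldl_nil]

lemma sb_inv (w : List Bool) :
    ((sb w).1.1 * (sb w).2.1.2 = (sb w).1.2 * (sb w).2.1.1 + 1) ∧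
    ((sb w).2.2.1 * (sb w).1.2 = (sb w).2.2.2 * (sb w).1.1 + 1) ∧
    (Oo (sb w).1, Oo (sb w).2.1, Oo (sb w).2.2) = auto w := by
  induction w using List.reverseRecOn with
  | nil =>
    refine ⟨by norm_num [sb], by norm_num [sb], ?_⟩
    show (Oo (1,1), Oo (0,1), Oo (1,0)) = (υ * ρ, υ, ρ)
    have h1 : Oo (1,1) = υ * ρ := by
      rw [Oo, fullWord_pos le_rfl le_rfl, tumble_r (by omega)]
      simp [orient, toPerm]
    have h2 : Oo (0,1) = υ := by rw [Oo, fullWord_01, orient_u]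
    have h3 : Oo (1,0) = ρ := by rw [Oo, fullWord_10, orient_r]
    rw [h1, h2, h3]
  | append_singleton w ε ih =>
    obtain ⟨h1, h2, h3⟩ := ih
    rcases hte : sb w with ⟨⟨g1, g2⟩, ⟨p1, p2⟩, ⟨m1, m2⟩⟩
    rw [hte] at h1 h2 h3
    simp only at h1 h2 h3
    rw [sb_append, hte, auto_append, ← h3]
    cases ε
    · refine ⟨?_, ?_, ?_⟩
      · show (g1+m1) * g2 = (g2+m2) * g1 + 1
        zify at h2 ⊢
        linear_combination h2
      · show m1 * (g2+m2) = m2 * (g1+m1) + 1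
        zify at h2 ⊢
        linear_combination h2
      · show (Oo ((g1,g2)+(m1,m2)), Oo (g1,g2), Oo (m1,m2)) =
          (Oo (g1,g2) * Oo (m1,m2), Oo (g1,g2), Oo (m1,m2))
        rw [show (g1,g2) + (m1,m2) = (m1,m2) + (g1,g2) from by rw [add_comm], Oo_add h2]
    · refine ⟨?_, ?_, ?_⟩
      · show (g1+p1) * p2 = (g2+p2) * p1 + 1
        zify at h1 ⊢
        linear_combination h1
      · show g1 * (g2+p2) = g2 * (g1+p1) + 1
        zify at h1 ⊢
        linear_combination h1
      · show (Oo ((g1,g2)+(p1,p2)), Oo (p1,p2), Oo (g1,g2)) =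
          (Oo (p1,p2) * Oo (g1,g2), Oo (p1,p2), Oo (g1,g2))
        rw [Oo_add h1]

lemma sigma_auto (w : List Bool) : σnode w = υ⁻¹ * (auto w).1 * ρ⁻¹ := by
  obtain ⟨h1, h2, h3⟩ := sb_inv w
  have ha : 1 ≤ (sb w).1.1 :=
    Nat.pos_of_ne_zero fun h => by rw [h] at h1; simp at h1
  have hb : 1 ≤ (sb w).1.2 :=
    Nat.pos_of_ne_zero fun h => by rw [h] at h2; simp at h2
  have hO : Oo (sb w).1 = (auto w).1 := congrArg Prod.fst h3
  rw [σnode, show (sb w).1 = ((sb w).1.1, (sb w).1.2) from rfl, sigmaPt_eq ha hb, hO]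

def enc (p : Equiv.Perm (Fin 4)) : ℕ := (p 0).val + 4 * (p 1).val + 16 * (p 2).val

lemma enc_inj {p q : Equiv.Perm (Fin 4)} (h : enc p = enc q) : p = q := by
  have b0 := (p 0).isLt
  have b1 := (p 1).isLt
  have b2 := (p 2).isLt
  have b3 := (p 3).isLt
  have c0 := (q 0).isLt
  have c1 := (q 1).isLt
  have c2 := (q 2).isLt
  have c3 := (q 3).isLt
  rw [enc, enc] at h
  have hd : ∀ (f : Equiv.Perm (Fin 4)) (x y : Fin 4), x ≠ y → (f x).val ≠ (f y).val :=
    fun f x y hxy hh => hxy (f.injective (Fin.ext hh))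
  have e1 := hd p 0 1 (by decide)
  have e2 := hd p 0 2 (by decide)
  have e3 := hd p 1 2 (by decide)
  have a1 := hd p 3 0 (by decide)
  have a2 := hd p 3 1 (by decide)
  have a3 := hd p 3 2 (by decide)
  have d1 := hd q 3 0 (by decide)
  have d2 := hd q 3 1 (by decide)
  have d3 := hd q 3 2 (by decide)
  have h0 : p 0 = q 0 := Fin.ext (by omega)
  have h1 : p 1 = q 1 := Fin.ext (by omega)
  have h2 : p 2 = q 2 := Fin.ext (by omega)
  have h3 : p 3 = q 3 := by
    refine Fin.ext ?_
    rw [Fin.ext_iff] at h0 h1 h2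
    omega
  apply Equiv.ext
  intro x
  have hx : x = 0 ∨ x = 1 ∨ x = 2 ∨ x = 3 := by omega
  rcases hx with rfl | rfl | rfl | rfl <;> assumption

lemma enc_lt (p : Equiv.Perm (Fin 4)) : enc p < 64 := by
  have := (p 0).isLt
  have := (p 1).isLt
  have := (p 2).isLt
  rw [enc]; omega

def encS (s : SState) : ℕ := enc s.1 + 64 * enc s.2.1 + 4096 * enc s.2.2

lemma encS_inj {s t : SState} (h : encS s = encS t) : s = t := by
  obtain ⟨P, Q, R⟩ := s
  obtain ⟨P', Q', R'⟩ := t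
  rw [encS, encS] at h
  simp only at h
  have := enc_lt P; have := enc_lt Q; have := enc_lt R
  have := enc_lt P'; have := enc_lt Q'; have := enc_lt R'
  have h1 : enc P = enc P' ∧ enc Q = enc Q' ∧ enc R = enc R' := by omega
  rw [enc_inj h1.1, enc_inj h1.2.1, enc_inj h1.2.2]

lemma ups_inv : υ⁻¹ = ol ![3,2,0,1] :=
  inv_eq_of_mul_eq_one_right (Equiv.ext (by decide))

lemma rho_inv : ρ⁻¹ = ol ![3,0,1,2] :=
  inv_eq_of_mul_eq_one_right (Equiv.ext (by decide))

def Wlist : List (List Bool) := 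
  [[],
   [true],
   [false],
   [true, true],
   [true, false],
   [false, true],
   [false, false],
   [true, true, true],
   [true, true, false],
   [true, false, true],
   [true, false, false],
   [false, true, true],
   [false, true, false],
   [false, false, true],
   [false, false, false],
   [true, true, true, false],
   [true, true, false, true],
   [true, false, false, true],
   [false, true, true, false],
   [false, false, true, false],
   [false, false, false, true],
   [true, true, true, false, true],
   [true, true, true, false, false],
   [true, true, false, true, true],
   [true, false, false, true, true],
   [false, false, false, true, true],
   [false, false, false, true, false]]


def stateList : List SState := Wlist.map auto

def codes : List ℕ := Wlist.map (fun w => encS (auto w))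

lemma codes_eq : stateList.map encS = codes := by
  rw [stateList, List.map_map]; rfl

set_option maxRecDepth 8000 in
lemma codes_nodup : codes.Nodup := by decide

lemma stateList_nodup : stateList.Nodup := by
  have h := codes_nodup
  rw [← codes_eq] at h
  exact h.of_map encS

lemma mem_stateList_of_code {s : SState} (h : encS s ∈ codes) : s ∈ stateList := by
  rw [← codes_eq] at h
  obtain ⟨t, ht, hts⟩ := List.mem_map.mp h
  rwa [encS_inj hts] at ht

set_option maxRecDepth 8000 in
lemma auto_closed_code : ∀ w ∈ Wlist, ∀ ε : Bool, encS (ostep (auto w) ε) ∈ codes := by decide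

lemma auto_closed : ∀ s ∈ stateList, ∀ ε : Bool, ostep s ε ∈ stateList := by
  intro s hs ε
  obtain ⟨w, hw, rfl⟩ := List.mem_map.mp hs
  exact mem_stateList_of_code (auto_closed_code w hw ε)

lemma reach (w : List Bool) : auto w ∈ stateList := by
  induction w using List.reverseRecOn with
  | nil => exact List.mem_map.mpr ⟨[], by decide, rfl⟩
  | append_singleton w ε ih =>
    rw [auto_append]
    exact auto_closed _ ih ε

set_option maxRecDepth 8000 in
lemma key9_code : ∀ w ∈ Wlist,
    (enc (ol ![3,2,0,1] * (auto w).1 * ol ![3,0,1,2]) = enc (ol ![0, 1, 2, 3]) ∨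
     enc (ol ![3,2,0,1] * (auto w).1 * ol ![3,0,1,2]) = enc (ol ![0, 2, 1, 3]) ∨
     enc (ol ![3,2,0,1] * (auto w).1 * ol ![3,0,1,2]) = enc (ol ![1, 0, 3, 2]) ∨
     enc (ol ![3,2,0,1] * (auto w).1 * ol ![3,0,1,2]) = enc (ol ![1, 2, 3, 0]) ∨
     enc (ol ![3,2,0,1] * (auto w).1 * ol ![3,0,1,2]) = enc (ol ![2, 3, 0, 1]) ∨
     enc (ol ![3,2,0,1] * (auto w).1 * ol ![3,0,1,2]) = enc (ol ![2, 3, 1, 0]) ∨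
     enc (ol ![3,2,0,1] * (auto w).1 * ol ![3,0,1,2]) = enc (ol ![3, 0, 1, 2]) ∨
     enc (ol ![3,2,0,1] * (auto w).1 * ol ![3,0,1,2]) = enc (ol ![3, 1, 2, 0]) ∨
     enc (ol ![3,2,0,1] * (auto w).1 * ol ![3,0,1,2]) = enc (ol ![3, 2, 0, 1])) := by decide

lemma key9 : ∀ s ∈ stateList,
    (υ⁻¹ * s.1 * ρ⁻¹ = ol ![0, 1, 2, 3] ∨ υ⁻¹ * s.1 * ρ⁻¹ = ol ![0, 2, 1, 3] ∨
     υ⁻¹ * s.1 * ρ⁻¹ = ol ![1, 0, 3, 2] ∨ υ⁻¹ * s.1 * ρ⁻¹ = ol ![1, 2, 3, 0] ∨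
     υ⁻¹ * s.1 * ρ⁻¹ = ol ![2, 3, 0, 1] ∨ υ⁻¹ * s.1 * ρ⁻¹ = ol ![2, 3, 1, 0] ∨
     υ⁻¹ * s.1 * ρ⁻¹ = ol ![3, 0, 1, 2] ∨ υ⁻¹ * s.1 * ρ⁻¹ = ol ![3, 1, 2, 0] ∨
     υ⁻¹ * s.1 * ρ⁻¹ = ol ![3, 2, 0, 1]) := by
  intro s hs
  obtain ⟨w, hw, rfl⟩ := List.mem_map.mp hs
  rw [ups_inv, rho_inv]
  rcases key9_code w hw with h|h|h|h|h|h|h|h|h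
  · exact Or.inl (enc_inj h)
  · exact Or.inr (Or.inl (enc_inj h))
  · exact Or.inr (Or.inr (Or.inl (enc_inj h)))
  · exact Or.inr (Or.inr (Or.inr (Or.inl (enc_inj h))))
  · exact Or.inr (Or.inr (Or.inr (Or.inr (Or.inl (enc_inj h)))))
  · exact Or.inr (Or.inr (Or.inr (Or.inr (Or.inr (Or.inl (enc_inj h))))))
  · exact Or.inr (Or.inr (Or.inr (Or.inr (Or.inr (Or.inr (Or.inl (enc_inj h)))))))
  · exact Or.inr (Or.inr (Or.inr (Or.inr (Or.inr (Or.inr (Or.inr (Or.inl (enc_inj h))))))))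
  · exact Or.inr (Or.inr (Or.inr (Or.inr (Or.inr (Or.inr (Or.inr (Or.inr (enc_inj h))))))))

set_option maxRecDepth 8000 in
lemma inj_PQ : ∀ w ∈ Wlist, ∀ w' ∈ Wlist,
    enc (auto w).1 = enc (auto w').1 → enc (auto w).2.1 = enc (auto w').2.1 →
    encS (auto w) = encS (auto w') := by decide

set_option maxRecDepth 8000 in
lemma inj_PR : ∀ w ∈ Wlist, ∀ w' ∈ Wlist,
    enc (auto w).1 = enc (auto w').1 → enc (auto w).2.2 = enc (auto w').2.2 →
    encS (auto w) = encS (auto w') := by decide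

lemma state_inj_PQ : ∀ s ∈ stateList, ∀ s' ∈ stateList,
    s.1 = s'.1 → s.2.1 = s'.2.1 → s = s' := by
  intro s hs s' hs' h1 h2
  obtain ⟨w, hw, rfl⟩ := List.mem_map.mp hs
  obtain ⟨w', hw', rfl⟩ := List.mem_map.mp hs'
  exact encS_inj (inj_PQ w hw w' hw' (by rw [h1]) (by rw [h2]))

lemma state_inj_PR : ∀ s ∈ stateList, ∀ s' ∈ stateList,
    s.1 = s'.1 → s.2.2 = s'.2.2 → s = s' := by
  intro s hs s' hs' h1 h2
  obtain ⟨w, hw, rfl⟩ := List.mem_map.mp hs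
  obtain ⟨w', hw', rfl⟩ := List.mem_map.mp hs'
  exact encS_inj (inj_PR w hw w' hw' (by rw [h1]) (by rw [h2]))

def edgeOf (q : SState × Bool) : Equiv.Perm (Fin 4) × Equiv.Perm (Fin 4) × Bool :=
  (υ⁻¹ * q.1.1 * ρ⁻¹, υ⁻¹ * (ostep q.1 q.2).1 * ρ⁻¹, q.2)

def pairsF : Finset (SState × Bool) := stateList.toFinset ×ˢ Finset.univ

lemma pairsF_card : pairsF.card = 54 := by
  rw [pairsF, Finset.card_product, List.toFinset_card_of_nodup stateList_nodup,
    stateList, List.length_map]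
  rfl

lemma edge_injOn : Set.InjOn edgeOf ↑pairsF := by
  rintro ⟨⟨P, Q, R⟩, ε⟩ hq ⟨⟨P', Q', R'⟩, ε'⟩ hq' heq
  have hq1 : ((P,Q,R) : SState) ∈ stateList :=
    List.mem_toFinset.mp (Finset.mem_product.mp hq).1
  have hq1' : ((P',Q',R') : SState) ∈ stateList :=
    List.mem_toFinset.mp (Finset.mem_product.mp hq').1
  have h3 : ε = ε' := congrArg (fun e => e.2.2) heq
  subst h3
  have h1 : υ⁻¹ * P * ρ⁻¹ = υ⁻¹ * P' * ρ⁻¹ := congrArg (fun e => e.1) heq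
  have hP : P = P' := mul_left_cancel (mul_right_cancel h1)
  subst hP
  have h2 : υ⁻¹ * (ostep (P,Q,R) ε).1 * ρ⁻¹ = υ⁻¹ * (ostep (P,Q',R') ε).1 * ρ⁻¹ :=
    congrArg (fun e => e.2.1) heq
  have hO : (ostep (P,Q,R) ε).1 = (ostep (P,Q',R') ε).1 :=
    mul_left_cancel (mul_right_cancel h2)
  cases ε
  · have hR : R = R' := mul_left_cancel (show P * R = P * R' from hO)
    have hs := state_inj_PR _ hq1 _ hq1' rfl hR
    rw [hs]
  · have hQ : Q = Q' := mul_right_cancel (show Q * P = Q' * P from hO)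
    have hs := state_inj_PQ _ hq1 _ hq1' rfl hQ
    rw [hs]

-- sanity checks

/-- The set `S` of cube orientations occurring at nodes of the Stern–Brocot tree
consists of exactly the 9 permutations with one-line notations
`0123, 0213, 1032, 1230, 2301, 2310, 3012, 3120, 3201`; moreover, the set `E` of
edge labels `(σ(s), σ(t), ε)` occurring in the tree has exactly 54 elements. -/
theorem orientations_and_edge_labels_count :
    {p : Equiv.Perm (Fin 4) | ∃ w : List Bool, σnode w = p} =
      {ol ![0, 1, 2, 3], ol ![0, 2, 1, 3], ol ![1, 0, 3, 2], ol ![1, 2, 3, 0],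
        ol ![2, 3, 0, 1], ol ![2, 3, 1, 0], ol ![3, 0, 1, 2], ol ![3, 1, 2, 0],
        ol ![3, 2, 0, 1]} ∧
      {e : Equiv.Perm (Fin 4) × Equiv.Perm (Fin 4) × Bool |
        ∃ (w : List Bool) (ε : Bool),
          e = (σnode w, σnode (w ++ [ε]), ε)}.ncard = 54 := by
  constructor
  · ext p
    simp only [Set.mem_setOf_eq, Set.mem_insert_iff, Set.mem_singleton_iff]
    constructor
    · rintro ⟨w, rfl⟩
      rw [sigma_auto]
      exact key9 _ (reach w)
    · rintro (rfl | rfl | rfl | rfl | rfl | rfl | rfl | rfl | rfl)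
      · exact ⟨[], by rw [sigma_auto, ups_inv, rho_inv]; exact enc_inj (by decide)⟩
      · exact ⟨[true, false], by rw [sigma_auto, ups_inv, rho_inv]; exact enc_inj (by decide)⟩
      · exact ⟨[true, true], by rw [sigma_auto, ups_inv, rho_inv]; exact enc_inj (by decide)⟩
      · exact ⟨[false], by rw [sigma_auto, ups_inv, rho_inv]; exact enc_inj (by decide)⟩
      · exact ⟨[false, false], by rw [sigma_auto, ups_inv, rho_inv]; exact enc_inj (by decide)⟩
      · exact ⟨[true], by rw [sigma_auto, ups_inv, rho_inv]; exact enc_inj (by decide)⟩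
      · exact ⟨[true, true, false], by rw [sigma_auto, ups_inv, rho_inv]; exact enc_inj (by decide)⟩
      · exact ⟨[true, true, true, false], by rw [sigma_auto, ups_inv, rho_inv]; exact enc_inj (by decide)⟩
      · exact ⟨[true, true, true], by rw [sigma_auto, ups_inv, rho_inv]; exact enc_inj (by decide)⟩
  · have hE : {e : Equiv.Perm (Fin 4) × Equiv.Perm (Fin 4) × Bool |
        ∃ (w : List Bool) (ε : Bool), e = (σnode w, σnode (w ++ [ε]), ε)} =
          edgeOf '' ↑pairsF := by
      ext e
      simp only [Set.mem_setOf_eq, Set.mem_image, Finset.mem_coe]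
      constructor
      · rintro ⟨w, ε, rfl⟩
        refine ⟨(auto w, ε), Finset.mem_product.mpr
          ⟨List.mem_toFinset.mpr (reach w), Finset.mem_univ _⟩, ?_⟩
        rw [sigma_auto w, sigma_auto (w ++ [ε]), auto_append]
        rfl
      · rintro ⟨⟨s, ε⟩, hmem, rfl⟩
        have hs : s ∈ stateList := List.mem_toFinset.mp (Finset.mem_product.mp hmem).1
        obtain ⟨w, _, hws⟩ := List.mem_map.mp hs
        refine ⟨w, ε, ?_⟩
        rw [sigma_auto w, sigma_auto (w ++ [ε]), auto_append, hws]
        rfl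
    rw [hE, Set.ncard_image_of_injOn edge_injOn, Set.ncard_coe_finset, pairsF_card]
end
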